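/- arXiv:2404.05167 — 2 statements merged into one kernel-verified Lean document; each statement's English description precedes it below -/
import Mathlib

section
/- Let H⁺ be a nonnegative random variable with Laplace-Stieltjes transform f(s) = E[e^{-sH⁺}], and let λ > 0, λ⁺ > 0 with λ⁺·E[H⁺] < 1. Then the equation x - λ - λ⁺ + λ⁺·f(x) = 0 has a unique solution γ in the interval [λ, λ + λ⁺]. -/
open MeasureTheory Filter Set Topology

private lemma exp_diff_le {h x y : ℝ} (hh : 0 ≤ h) (hx : 0 ≤ x) (hxy : x ≤ y) :
    Real.exp (-x * h) - Real.exp (-y * h) ≤ (y - x) * h := by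
  have h1 : Real.exp (-y * h) = Real.exp (-x * h) * Real.exp (-(y - x) * h) := by
    rw [← Real.exp_add]; ring_nf
  have h2 := Real.add_one_le_exp (-(y - x) * h)
  have h3 : Real.exp (-x * h) ≤ 1 := Real.exp_le_one_iff.mpr (by nlinarith)
  have h4 : Real.exp (-(y - x) * h) ≤ 1 := Real.exp_le_one_iff.mpr (by nlinarith)
  have h5 := Real.exp_pos (-x * h)
  nlinarith

/-- The equation `x - λ - λ⁺ + λ⁺ f(x) = 0` has a unique solution
`γ` in `[λ, λ + λ⁺]`, where `f` is the LST of a nonnegative random variable `H⁺`,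
`λ, λ⁺ > 0` and `λ⁺ E[H⁺] < 1`. -/
theorem stmt2 {Ω : Type*} [MeasurableSpace Ω] (μ : Measure Ω) [IsProbabilityMeasure μ]
    (Hp : Ω → ℝ) (hHpMeas : Measurable Hp) (hHpNonneg : ∀ ω, 0 ≤ Hp ω)
    (hHpInt : Integrable Hp μ)
    (lam lamp : ℝ) (hlam : 0 < lam) (hlamp : 0 < lamp)
    (hrhop : lamp * (∫ ω, Hp ω ∂μ) < 1) :
    ∃! x : ℝ, x ∈ Set.Icc lam (lam + lamp) ∧
      x - lam - lamp + lamp * (∫ ω, Real.exp (-x * Hp ω) ∂μ) = 0 := by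
  set C : ℝ := ∫ ω, Hp ω ∂μ with hC
  have hC0 : 0 ≤ C := integral_nonneg hHpNonneg
  set f : ℝ → ℝ := fun x => ∫ ω, Real.exp (-x * Hp ω) ∂μ with hf
  set g : ℝ → ℝ := fun x => x - lam - lamp + lamp * f x with hg
  -- integrability
  have hint : ∀ x : ℝ, 0 ≤ x → Integrable (fun ω => Real.exp (-x * Hp ω)) μ := by
    intro x hx
    apply Integrable.mono' (integrable_const (1:ℝ))
      ((hHpMeas.const_mul (-x)).exp.aestronglyMeasurable)
    filter_upwards with ω
    rw [Real.norm_eq_abs, abs_of_pos (Real.exp_pos _)]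
    exact Real.exp_le_one_iff.mpr (by nlinarith [hHpNonneg ω])
  -- key estimate: for 0 ≤ x ≤ y, f x - f y ≤ (y - x) * C
  have hkey : ∀ x y : ℝ, 0 ≤ x → x ≤ y → f x - f y ≤ (y - x) * C := by
    intro x y hx hxy
    rw [hf, ← integral_sub (hint x hx) (hint y (le_trans hx hxy)), hC,
      ← integral_const_mul]
    exact integral_mono ((hint x hx).sub (hint y (le_trans hx hxy)))
      (hHpInt.const_mul _) (fun ω => exp_diff_le (hHpNonneg ω) hx hxy)
  -- antitone: f y ≤ f x for x ≤ y (needs h ≥ 0)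
  have hanti : ∀ x y : ℝ, 0 ≤ x → x ≤ y → f y ≤ f x := by
    intro x y hx hxy
    apply integral_mono (hint y (hx.trans hxy)) (hint x hx)
    intro ω
    exact Real.exp_le_exp.mpr (by nlinarith [hHpNonneg ω])
  -- strict mono of g on [0,∞)
  have hmono : ∀ x y : ℝ, 0 ≤ x → x < y → g x < g y := by
    intro x y hx hxy
    have h1 := hkey x y hx hxy.le
    have : lamp * (f x - f y) ≤ lamp * ((y - x) * C) :=
      mul_le_mul_of_nonneg_left h1 hlamp.le
    have h2 : lamp * ((y - x) * C) < y - x := by nlinarith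
    simp only [hg]
    nlinarith
  -- Lipschitz on [0,∞) hence continuity
  have hlip : LipschitzOnWith (Real.toNNReal (1 + lamp * C)) g (Set.Ici (0:ℝ)) := by
    rw [lipschitzOnWith_iff_dist_le_mul]
    intro x hx y hy
    wlog hxy : y ≤ x generalizing x y
    · rw [dist_comm, dist_comm x y]; exact this y hy x hx (le_of_not_ge hxy)
    have hfd : 0 ≤ f y - f x := sub_nonneg.mpr (hanti y x hy hxy)
    have hk := hkey y x hy hxy
    rw [Real.dist_eq, Real.dist_eq, abs_of_nonneg (sub_nonneg.mpr hxy),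
      Real.coe_toNNReal _ (by positivity)]
    rw [abs_le]
    constructor
    · simp only [hg]; nlinarith
    · simp only [hg]; nlinarith
  have hcont : ContinuousOn g (Set.Icc lam (lam + lamp)) :=
    hlip.continuousOn.mono (fun x hx => le_trans hlam.le hx.1)
  -- endpoint values
  have hf1 : f lam ≤ 1 := by
    rw [hf]
    calc (∫ ω, Real.exp (-lam * Hp ω) ∂μ) ≤ ∫ _, (1:ℝ) ∂μ := by
          apply integral_mono (hint lam hlam.le) (integrable_const 1)
          intro ω
          exact Real.exp_le_one_iff.mpr (by nlinarith [hHpNonneg ω])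
      _ = 1 := by simp
  have hfnn : 0 ≤ f (lam + lamp) := integral_nonneg (fun ω => (Real.exp_pos _).le)
  have hga : g lam ≤ 0 := by simp only [hg]; nlinarith
  have hgb : 0 ≤ g (lam + lamp) := by simp only [hg]; nlinarith
  have := intermediate_value_Icc (by linarith : lam ≤ lam + lamp) hcont
  obtain ⟨x, hxmem, hxeq⟩ := this ⟨hga, hgb⟩
  refine ⟨x, ⟨hxmem, hxeq⟩, ?_⟩
  rintro y ⟨hymem, hyeq⟩
  by_contra hne
  rcases lt_or_gt_of_ne hne with h | h
  · have := hmono y x (by linarith [hymem.1]) h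
    rw [hxeq] at this; simp only [hg] at hyeq this; linarith
  · have := hmono x y (by linarith [hxmem.1]) h
    rw [hxeq] at this; simp only [hg] at hyeq this; linarith
end

section
/- Given the LST f_D*(s) = (1-ρ-ρ⁺)·s·f_H(s)/(φ(s) - λ + λ·f_H(s)) of the stationary system delay, its negative derivative at 0 (the mean delay) equals E[D] = (λ·E[H²] + λ⁺·E[(H⁺)²]) / (2(1-ρ-ρ⁺)) + E[H]. -/
open MeasureTheory Filter Set Topology

-- 1 - e^{-x} ≤ x  (all x)
lemma aux_one_sub_exp_le (x : ℝ) : 1 - Real.exp (-x) ≤ x := by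
  have := Real.add_one_le_exp (-x); linarith

-- x e^{-x} ≤ 1 - e^{-x}  (all x? need e^x ≥ 1+x) yes all x
lemma aux_le_one_sub_exp (x : ℝ) : x * Real.exp (-x) ≤ 1 - Real.exp (-x) := by
  have h := Real.add_one_le_exp x
  have he : 0 < Real.exp (-x) := Real.exp_pos _
  have : (x + 1) * Real.exp (-x) ≤ Real.exp x * Real.exp (-x) :=
    mul_le_mul_of_nonneg_right h he.le
  rw [← Real.exp_add, add_neg_cancel, Real.exp_zero] at this
  nlinarith

lemma aux_exp_hasDerivAt (x : ℝ) :
    HasDerivAt (fun x : ℝ => Real.exp (-x)) (-Real.exp (-x)) x := by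
  simpa [Function.comp_def] using ((Real.hasDerivAt_exp (-x)).comp x ((hasDerivAt_id x).neg))

-- ψ bounds
lemma aux_psi_upper {x : ℝ} (hx : 0 ≤ x) :
    1 - Real.exp (-x) - x * Real.exp (-x) ≤ x ^ 2 / 2 := by
  set u : ℝ → ℝ := fun x => x ^ 2 / 2 - (1 - Real.exp (-x) - x * Real.exp (-x))
  have hu : ∀ y : ℝ, HasDerivAt u (y * (1 - Real.exp (-y))) y := by
    intro y
    have h1 := aux_exp_hasDerivAt y
    have h2 : HasDerivAt (fun x : ℝ => x * Real.exp (-x))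
        (Real.exp (-y) + y * (-Real.exp (-y))) y := by simpa [Pi.mul_def] using (hasDerivAt_id y).mul h1
    have h3 : HasDerivAt (fun x : ℝ => x ^ 2 / 2) y y := by
      simpa using ((hasDerivAt_pow 2 y).div_const 2)
    have := (h3.sub (((hasDerivAt_const y (1:ℝ)).sub h1).sub h2))
    exact this.congr_deriv (by ring)
  have hmono : MonotoneOn u (Ici 0) := by
    apply monotoneOn_of_deriv_nonneg (convex_Ici 0)
    · exact (Continuous.continuousOn (by fun_prop))
    · intro y hy; exact ((hu y).differentiableAt).differentiableWithinAt
    · intro y hy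
      rw [(hu y).deriv]
      have hy0 : 0 < y := by simpa using hy
      have : Real.exp (-y) ≤ 1 := by
        rw [Real.exp_le_one_iff]; linarith
      nlinarith
  have h0 : u 0 = 0 := by simp [u]
  have := hmono (self_mem_Ici) (mem_Ici.mpr hx) hx
  rw [h0] at this
  simpa [u] using this

lemma aux_psi_lower {x : ℝ} (hx : 0 ≤ x) :
    x ^ 2 * Real.exp (-x) / 2 ≤ 1 - Real.exp (-x) - x * Real.exp (-x) := by
  set u : ℝ → ℝ := fun x => (1 - Real.exp (-x) - x * Real.exp (-x)) - x ^ 2 * Real.exp (-x) / 2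
  have hu : ∀ y : ℝ, HasDerivAt u (y ^ 2 * Real.exp (-y) / 2) y := by
    intro y
    have h1 := aux_exp_hasDerivAt y
    have h2 : HasDerivAt (fun x : ℝ => x * Real.exp (-x))
        (Real.exp (-y) + y * (-Real.exp (-y))) y := by simpa [Pi.mul_def] using (hasDerivAt_id y).mul h1
    have h3 : HasDerivAt (fun x : ℝ => x ^ 2 * Real.exp (-x) / 2)
        (((2 : ℕ) * y ^ 1 * Real.exp (-y) + y ^ 2 * (-Real.exp (-y))) / 2) y :=
      (((hasDerivAt_pow 2 y).mul h1).div_const 2)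
    have := (((hasDerivAt_const y (1:ℝ)).sub h1).sub h2).sub h3
    exact this.congr_deriv (by push_cast; ring)
  have hmono : MonotoneOn u (Ici 0) := by
    apply monotoneOn_of_deriv_nonneg (convex_Ici 0)
    · exact (Continuous.continuousOn (by fun_prop))
    · intro y hy; exact ((hu y).differentiableAt).differentiableWithinAt
    · intro y hy
      rw [(hu y).deriv]
      positivity
  have h0 : u 0 = 0 := by simp [u]
  have := hmono (self_mem_Ici) (mem_Ici.mpr hx) hx
  rw [h0] at this
  simpa [u] using this

section Int
variable {Ω : Type*} [MeasurableSpace Ω] (μ : Measure Ω) [IsProbabilityMeasure μ]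
  {T : Ω → ℝ} (hT : Measurable T) (hT0 : ∀ ω, 0 ≤ T ω) (hTi : Integrable T μ)

include hT hT0 in
lemma aux_meas_exp (s : ℝ) :
    AEStronglyMeasurable (fun ω => Real.exp (-s * T ω)) μ := by
  have : Measurable (fun ω => Real.exp (-s * T ω)) := by fun_prop
  exact this.aestronglyMeasurable

include hT hT0 in
lemma aux_int_exp {s : ℝ} (hs : 0 ≤ s) :
    Integrable (fun ω => Real.exp (-s * T ω)) μ := by
  refine (integrable_const (1:ℝ)).mono' (aux_meas_exp μ hT hT0 s) ?_
  filter_upwards with ω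
  rw [Real.norm_eq_abs, abs_of_pos (Real.exp_pos _), Real.exp_le_one_iff]
  have := mul_nonneg hs (hT0 ω); linarith

include hT hT0 hTi in
lemma aux_int_mul_exp {s : ℝ} (hs : 0 ≤ s) :
    Integrable (fun ω => T ω * Real.exp (-s * T ω)) μ := by
  refine hTi.mono' ?_ ?_
  · have : Measurable (fun ω => T ω * Real.exp (-s * T ω)) := by fun_prop
    exact this.aestronglyMeasurable
  · filter_upwards with ω
    rw [Real.norm_eq_abs, abs_of_nonneg (mul_nonneg (hT0 ω) (Real.exp_pos _).le)]
    have h1 : Real.exp (-s * T ω) ≤ 1 := by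
      rw [Real.exp_le_one_iff]; have := mul_nonneg hs (hT0 ω); linarith
    nlinarith [hT0 ω]

include hT hT0 hTi in
lemma aux_lst_hasDerivAt {s : ℝ} (hs : 0 < s) :
    HasDerivAt (fun s => ∫ ω, Real.exp (-s * T ω) ∂μ)
      (∫ ω, -(T ω * Real.exp (-s * T ω)) ∂μ) s := by
  have hFm : ∀ᶠ x in 𝓝 s, AEStronglyMeasurable (fun ω => Real.exp (-x * T ω)) μ := by
    filter_upwards with x using aux_meas_exp μ hT hT0 x
  have hF'm : AEStronglyMeasurable (fun ω => -(T ω * Real.exp (-s * T ω))) μ := by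
    have : Measurable (fun ω => -(T ω * Real.exp (-s * T ω))) := by fun_prop
    exact this.aestronglyMeasurable
  have hbd : ∀ᵐ ω ∂μ, ∀ x ∈ Metric.ball s s,
      ‖-(T ω * Real.exp (-x * T ω))‖ ≤ T ω := by
    filter_upwards with ω x hx
    have hx0 : 0 < x := by
      have := abs_lt.mp (by simpa [Real.dist_eq] using hx)
      linarith [this.1]
    rw [norm_neg, Real.norm_eq_abs, abs_of_nonneg (mul_nonneg (hT0 ω) (Real.exp_pos _).le)]
    have h1 : Real.exp (-x * T ω) ≤ 1 := by
      rw [Real.exp_le_one_iff]; have := mul_nonneg hx0.le (hT0 ω); linarith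
    nlinarith [hT0 ω]
  have hdiff : ∀ᵐ ω ∂μ, ∀ x ∈ Metric.ball s s,
      HasDerivAt (fun x : ℝ => Real.exp (-x * T ω)) (-(T ω * Real.exp (-x * T ω))) x := by
    filter_upwards with ω x _
    have h1 : HasDerivAt (fun x : ℝ => -x * T ω) (-(T ω)) x := by
      simpa using ((hasDerivAt_id x).neg.mul_const (T ω))
    have := (Real.hasDerivAt_exp (-x * T ω)).comp x h1
    simpa [neg_mul, mul_comm, Function.comp_def] using this
  exact (hasDerivAt_integral_of_dominated_loc_of_deriv_le (Metric.ball_mem_nhds s hs) hFm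
    (aux_int_exp μ hT hT0 hs.le) hF'm hbd hTi hdiff).2
end Int

-- pointwise limits
lemma aux_ptw_exp (h : ℝ) :
    Tendsto (fun s : ℝ => Real.exp (-s * h)) (𝓝[>] 0) (𝓝 1) := by
  have hc : Continuous (fun s : ℝ => Real.exp (-s * h)) := by fun_prop
  have h2 : Tendsto (fun s : ℝ => Real.exp (-s * h)) (𝓝 (0:ℝ)) (𝓝 1) := by
    simpa using hc.tendsto 0
  exact h2.mono_left nhdsWithin_le_nhds

lemma aux_ptw_mul_exp (h : ℝ) :
    Tendsto (fun s : ℝ => h * Real.exp (-s * h)) (𝓝[>] 0) (𝓝 h) := by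
  have hc : Continuous (fun s : ℝ => h * Real.exp (-s * h)) := by fun_prop
  have h2 : Tendsto (fun s : ℝ => h * Real.exp (-s * h)) (𝓝 (0:ℝ)) (𝓝 h) := by
    simpa using hc.tendsto 0
  exact h2.mono_left nhdsWithin_le_nhds

lemma aux_ptw_J {h : ℝ} (hh : 0 ≤ h) :
    Tendsto (fun s : ℝ => (1 - Real.exp (-s * h)) / s) (𝓝[>] 0) (𝓝 h) := by
  refine tendsto_of_tendsto_of_tendsto_of_le_of_le' (aux_ptw_mul_exp h) tendsto_const_nhds ?_ ?_
  · filter_upwards [self_mem_nhdsWithin] with s (hs : 0 < s)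
    rw [le_div_iff₀ hs]
    have := aux_le_one_sub_exp (s * h)
    calc h * Real.exp (-s * h) * s = s * h * Real.exp (-(s * h)) := by ring_nf
    _ ≤ 1 - Real.exp (-(s*h)) := aux_le_one_sub_exp (s*h)
    _ = 1 - Real.exp (-s * h) := by ring_nf
  · filter_upwards [self_mem_nhdsWithin] with s (hs : 0 < s)
    rw [div_le_iff₀ hs]
    have := aux_one_sub_exp_le (s * h)
    calc 1 - Real.exp (-s*h) = 1 - Real.exp (-(s*h)) := by ring_nf
    _ ≤ s * h := aux_one_sub_exp_le (s*h)
    _ = h * s := by ring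

lemma aux_ptw_K {h : ℝ} (hh : 0 ≤ h) :
    Tendsto (fun s : ℝ => (1 - Real.exp (-s * h) - s * h * Real.exp (-s * h)) / s ^ 2)
      (𝓝[>] 0) (𝓝 (h ^ 2 / 2)) := by
  have hlow : Tendsto (fun s : ℝ => h ^ 2 * Real.exp (-s * h) / 2) (𝓝[>] 0) (𝓝 (h ^ 2 / 2)) := by
    have hc : Continuous (fun s : ℝ => h ^ 2 * Real.exp (-s * h) / 2) := by fun_prop
    have h2 : Tendsto (fun s : ℝ => h ^ 2 * Real.exp (-s * h) / 2) (𝓝 (0:ℝ)) (𝓝 (h ^ 2 / 2)) := by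
      simpa using hc.tendsto 0
    exact h2.mono_left nhdsWithin_le_nhds
  refine tendsto_of_tendsto_of_tendsto_of_le_of_le' hlow tendsto_const_nhds ?_ ?_
  · filter_upwards [self_mem_nhdsWithin] with s (hs : 0 < s)
    rw [le_div_iff₀ (by positivity : (0:ℝ) < s ^ 2)]
    have := aux_psi_lower (mul_nonneg hs.le hh)
    calc h ^ 2 * Real.exp (-s * h) / 2 * s ^ 2
        = (s*h) ^ 2 * Real.exp (-(s*h)) / 2 := by ring_nf
    _ ≤ 1 - Real.exp (-(s*h)) - (s*h) * Real.exp (-(s*h)) := aux_psi_lower (mul_nonneg hs.le hh)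
    _ = 1 - Real.exp (-s * h) - s * h * Real.exp (-s * h) := by ring_nf
  · filter_upwards [self_mem_nhdsWithin] with s (hs : 0 < s)
    rw [div_le_iff₀ (by positivity)]
    calc 1 - Real.exp (-s * h) - s * h * Real.exp (-s * h)
        = 1 - Real.exp (-(s*h)) - (s*h) * Real.exp (-(s*h)) := by ring_nf
    _ ≤ (s*h) ^ 2 / 2 := aux_psi_upper (mul_nonneg hs.le hh)
    _ = h ^ 2 / 2 * s ^ 2 := by ring

section Lim
variable {Ω : Type*} [MeasurableSpace Ω] (μ : Measure Ω) [IsProbabilityMeasure μ]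
  {T : Ω → ℝ} (hT : Measurable T) (hT0 : ∀ ω, 0 ≤ T ω) (hTi : Integrable T μ)
  (hT2i : Integrable (fun ω => T ω ^ 2) μ)

include hT hT0 in
lemma aux_tendsto_g :
    Tendsto (fun s : ℝ => ∫ ω, Real.exp (-s * T ω) ∂μ) (𝓝[>] 0) (𝓝 1) := by
  have key : Tendsto (fun s : ℝ => ∫ ω, Real.exp (-s * T ω) ∂μ) (𝓝[>] 0)
      (𝓝 (∫ _ω, (1:ℝ) ∂μ)) := by
    refine tendsto_integral_filter_of_dominated_convergence (fun _ => (1:ℝ))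
      (Eventually.of_forall fun s => aux_meas_exp μ hT hT0 s) ?_ (integrable_const 1) ?_
    · filter_upwards [self_mem_nhdsWithin] with s (hs : 0 < s)
      filter_upwards with ω
      rw [Real.norm_eq_abs, abs_of_pos (Real.exp_pos _), Real.exp_le_one_iff]
      have := mul_nonneg hs.le (hT0 ω); linarith
    · filter_upwards with ω using aux_ptw_exp (T ω)
  simpa using key

include hT hT0 hTi in
lemma aux_tendsto_gd :
    Tendsto (fun s : ℝ => ∫ ω, T ω * Real.exp (-s * T ω) ∂μ) (𝓝[>] 0)
      (𝓝 (∫ ω, T ω ∂μ)) := by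
  refine tendsto_integral_filter_of_dominated_convergence (μ := μ) T ?_ ?_ hTi ?_
  · filter_upwards with s
    have : Measurable (fun ω => T ω * Real.exp (-s * T ω)) := by fun_prop
    exact this.aestronglyMeasurable
  · filter_upwards [self_mem_nhdsWithin] with s (hs : 0 < s)
    filter_upwards with ω
    rw [Real.norm_eq_abs, abs_of_nonneg (mul_nonneg (hT0 ω) (Real.exp_pos _).le)]
    have h1 : Real.exp (-s * T ω) ≤ 1 := by
      rw [Real.exp_le_one_iff]; have := mul_nonneg hs.le (hT0 ω); linarith
    nlinarith [hT0 ω]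
  · filter_upwards with ω using aux_ptw_mul_exp (T ω)

include hT hT0 hTi in
lemma aux_tendsto_J :
    Tendsto (fun s : ℝ => ∫ ω, (1 - Real.exp (-s * T ω)) / s ∂μ) (𝓝[>] 0)
      (𝓝 (∫ ω, T ω ∂μ)) := by
  refine tendsto_integral_filter_of_dominated_convergence (μ := μ) T ?_ ?_ hTi ?_
  · filter_upwards with s
    have : Measurable (fun ω => (1 - Real.exp (-s * T ω)) / s) := by fun_prop
    exact this.aestronglyMeasurable
  · filter_upwards [self_mem_nhdsWithin] with s (hs : 0 < s)
    filter_upwards with ω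
    have hb : 1 - Real.exp (-s * T ω) ≤ s * T ω := by
      have := aux_one_sub_exp_le (s * T ω); rw [neg_mul]; linarith
    have hnn : 0 ≤ 1 - Real.exp (-s * T ω) := by
      rw [sub_nonneg, Real.exp_le_one_iff]
      have := mul_nonneg hs.le (hT0 ω); linarith
    rw [Real.norm_eq_abs, abs_of_nonneg (by positivity), div_le_iff₀ hs]
    calc 1 - Real.exp (-s * T ω) ≤ s * T ω := hb
    _ = T ω * s := by ring
  · filter_upwards with ω using aux_ptw_J (hT0 ω)

include hT hT0 hT2i in
lemma aux_tendsto_K :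
    Tendsto (fun s : ℝ =>
        ∫ ω, (1 - Real.exp (-s * T ω) - s * T ω * Real.exp (-s * T ω)) / s ^ 2 ∂μ) (𝓝[>] 0)
      (𝓝 ((∫ ω, T ω ^ 2 ∂μ) / 2)) := by
  have key : Tendsto (fun s : ℝ =>
        ∫ ω, (1 - Real.exp (-s * T ω) - s * T ω * Real.exp (-s * T ω)) / s ^ 2 ∂μ) (𝓝[>] 0)
      (𝓝 (∫ ω, T ω ^ 2 / 2 ∂μ)) := by
    refine tendsto_integral_filter_of_dominated_convergence (fun ω => T ω ^ 2) ?_ ?_ hT2i ?_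
    · filter_upwards with s
      have : Measurable (fun ω =>
          (1 - Real.exp (-s * T ω) - s * T ω * Real.exp (-s * T ω)) / s ^ 2) := by fun_prop
      exact this.aestronglyMeasurable
    · filter_upwards [self_mem_nhdsWithin] with s (hs : 0 < s)
      filter_upwards with ω
      have hx : 0 ≤ s * T ω := mul_nonneg hs.le (hT0 ω)
      have hup : 1 - Real.exp (-(s * T ω)) - (s * T ω) * Real.exp (-(s * T ω)) ≤ (s * T ω) ^ 2 / 2 :=
        aux_psi_upper hx
      have hlo : 0 ≤ 1 - Real.exp (-(s * T ω)) - (s * T ω) * Real.exp (-(s * T ω)) :=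
        le_trans (by positivity) (aux_psi_lower hx)
      rw [Real.norm_eq_abs, neg_mul, abs_of_nonneg (by positivity), div_le_iff₀ (by positivity)]
      nlinarith
    · filter_upwards with ω using aux_ptw_K (hT0 ω)
  rw [integral_div] at key
  exact key
end Lim

section Ids
variable {Ω : Type*} [MeasurableSpace Ω] (μ : Measure Ω) [IsProbabilityMeasure μ]
  {T : Ω → ℝ} (hT : Measurable T) (hT0 : ∀ ω, 0 ≤ T ω) (hTi : Integrable T μ)

include hT hT0 in
lemma aux_J_eq {s : ℝ} (hs : 0 < s) :
    ∫ ω, (1 - Real.exp (-s * T ω)) / s ∂μ = (1 - ∫ ω, Real.exp (-s * T ω) ∂μ) / s := by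
  rw [integral_div, integral_sub (integrable_const 1) (aux_int_exp μ hT hT0 hs.le)]
  simp

include hT hT0 hTi in
lemma aux_K_eq {s : ℝ} (hs : 0 < s) :
    ∫ ω, (1 - Real.exp (-s * T ω) - s * T ω * Real.exp (-s * T ω)) / s ^ 2 ∂μ
      = (1 - (∫ ω, Real.exp (-s * T ω) ∂μ) - s * ∫ ω, T ω * Real.exp (-s * T ω) ∂μ) / s ^ 2 := by
  have h1 : Integrable (fun ω => 1 - Real.exp (-s * T ω)) μ := by
    exact (integrable_const (1:ℝ)).sub (aux_int_exp μ hT hT0 hs.le)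
  have h2 : Integrable (fun ω => s * T ω * Real.exp (-s * T ω)) μ := by
    simpa [mul_assoc] using (aux_int_mul_exp μ hT hT0 hTi hs.le).const_mul s
  rw [integral_div]
  congr 1
  rw [integral_sub h1 h2,
    integral_sub (integrable_const 1) (aux_int_exp μ hT hT0 hs.le)]
  have : ∫ ω, s * T ω * Real.exp (-s * T ω) ∂μ = s * ∫ ω, T ω * Real.exp (-s * T ω) ∂μ := by
    rw [← integral_const_mul]; congr 1; funext ω; ring
  rw [this]; simp

include hT hT0 hTi in
lemma aux_one_sub_g_le {s : ℝ} (hs : 0 < s) :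
    1 - (∫ ω, Real.exp (-s * T ω) ∂μ) ≤ s * ∫ ω, T ω ∂μ := by
  have h1 : ∫ ω, (1 - Real.exp (-s * T ω)) ∂μ ≤ ∫ ω, s * T ω ∂μ := by
    refine integral_mono ((integrable_const 1).sub (aux_int_exp μ hT hT0 hs.le))
      (hTi.const_mul s) fun ω => ?_
    have := aux_one_sub_exp_le (s * T ω)
    rw [neg_mul] at *; linarith
  rw [integral_sub (integrable_const 1) (aux_int_exp μ hT hT0 hs.le), integral_const_mul] at h1
  simpa using h1
end Ids

/-- the negative derivative at `0+` of the system-delay LST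
`f_D*(s) = (1-ρ-ρ⁺) s f_H(s)/(φ(s) - λ + λ f_H(s))` equals the mean delay
`E[D] = (λ E[H²] + λ⁺ E[(H⁺)²]) / (2(1-ρ-ρ⁺)) + E[H]`. -/
theorem stmt7 {Ω : Type*} [MeasurableSpace Ω] (μ : Measure Ω) [IsProbabilityMeasure μ]
    (H Hp : Ω → ℝ) (hHMeas : Measurable H) (hHpMeas : Measurable Hp)
    (hHNonneg : ∀ ω, 0 ≤ H ω) (hHpNonneg : ∀ ω, 0 ≤ Hp ω)
    (hHInt : Integrable H μ) (hHpInt : Integrable Hp μ)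
    (hH2Int : Integrable (fun ω => (H ω) ^ 2) μ)
    (hHp2Int : Integrable (fun ω => (Hp ω) ^ 2) μ)
    (lam lamp : ℝ) (hlam : 0 < lam) (hlamp : 0 < lamp)
    (hstab : lam * (∫ ω, H ω ∂μ) + lamp * (∫ ω, Hp ω ∂μ) < 1)
    (φ fD : ℝ → ℝ)
    (hφ : ∀ s, φ s = s - lamp + lamp * ∫ ω, Real.exp (-s * Hp ω) ∂μ)
    (hfD : ∀ s, fD s =
      (1 - lam * (∫ ω, H ω ∂μ) - lamp * (∫ ω, Hp ω ∂μ)) * s *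
          (∫ ω, Real.exp (-s * H ω) ∂μ) /
        (φ s - lam + lam * (∫ ω, Real.exp (-s * H ω) ∂μ))) :
    Tendsto (fun s => -(deriv fD s)) (𝓝[>] (0:ℝ))
      (𝓝 ((lam * (∫ ω, (H ω) ^ 2 ∂μ) + lamp * (∫ ω, (Hp ω) ^ 2 ∂μ)) /
          (2 * (1 - lam * (∫ ω, H ω ∂μ) - lamp * (∫ ω, Hp ω ∂μ))) +
        (∫ ω, H ω ∂μ))) := by
  set m1 : ℝ := ∫ ω, H ω ∂μ with hm1
  set m1p : ℝ := ∫ ω, Hp ω ∂μ with hm1p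
  set m2 : ℝ := ∫ ω, (H ω) ^ 2 ∂μ with hm2
  set m2p : ℝ := ∫ ω, (Hp ω) ^ 2 ∂μ with hm2p
  set c : ℝ := 1 - lam * m1 - lamp * m1p with hcdef
  have hc : 0 < c := by rw [hcdef]; linarith
  set g : ℝ → ℝ := fun s => ∫ ω, Real.exp (-s * H ω) ∂μ with hg
  set gP : ℝ → ℝ := fun s => ∫ ω, Real.exp (-s * Hp ω) ∂μ with hgP
  set gd : ℝ → ℝ := fun s => ∫ ω, H ω * Real.exp (-s * H ω) ∂μ with hgd
  set gdP : ℝ → ℝ := fun s => ∫ ω, Hp ω * Real.exp (-s * Hp ω) ∂μ with hgdP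
  set J : ℝ → ℝ := fun s => (1 - g s) / s with hJ
  set JP : ℝ → ℝ := fun s => (1 - gP s) / s with hJP
  set K : ℝ → ℝ := fun s => (1 - g s - s * gd s) / s ^ 2 with hK
  set KP : ℝ → ℝ := fun s => (1 - gP s - s * gdP s) / s ^ 2 with hKP
  set N : ℝ → ℝ := fun s => 1 - lam * J s - lamp * JP s with hN
  -- derivative facts
  have hgD : ∀ s : ℝ, 0 < s → HasDerivAt g (-(gd s)) s := fun s hs => by
    have := aux_lst_hasDerivAt μ hHMeas hHNonneg hHInt hs
    rwa [integral_neg] at this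
  have hgPD : ∀ s : ℝ, 0 < s → HasDerivAt gP (-(gdP s)) s := fun s hs => by
    have := aux_lst_hasDerivAt μ hHpMeas hHpNonneg hHpInt hs
    rwa [integral_neg] at this
  -- bounds on N
  have hJle : ∀ s : ℝ, 0 < s → J s ≤ m1 := fun s hs => by
    rw [hJ, div_le_iff₀ hs]
    have := aux_one_sub_g_le μ hHMeas hHNonneg hHInt hs
    rw [hg]; rw [hm1]; linarith
  have hJPle : ∀ s : ℝ, 0 < s → JP s ≤ m1p := fun s hs => by
    rw [hJP, div_le_iff₀ hs]
    have := aux_one_sub_g_le μ hHpMeas hHpNonneg hHpInt hs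
    rw [hgP]; rw [hm1p]; linarith
  have hNge : ∀ s : ℝ, 0 < s → c ≤ N s := fun s hs => by
    have h1 := hJle s hs; have h2 := hJPle s hs
    rw [hN, hcdef]
    have := mul_le_mul_of_nonneg_left h1 hlam.le
    have := mul_le_mul_of_nonneg_left h2 hlamp.le
    simp only; linarith
  have hNpos : ∀ s : ℝ, 0 < s → 0 < N s := fun s hs => lt_of_lt_of_le hc (hNge s hs)
  have hNne : ∀ s : ℝ, 0 < s → N s ≠ 0 := fun s hs => (hNpos s hs).ne'
  -- denominator identity
  have hDden : ∀ s : ℝ, 0 < s →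
      φ s - lam + lam * g s = s * N s := fun s hs => by
    rw [hφ s, hN]
    simp only [hJ, hJP, hg, hgP]
    field_simp
    ring
  -- derivative of fD
  have hfD' : ∀ s : ℝ, 0 < s → deriv fD s =
      ((c * g s + c * s * (-(gd s))) * (s * N s)
          - c * s * g s * (1 + lamp * (-(gdP s)) + lam * (-(gd s)))) / (s * N s) ^ 2 := by
    intro s hs
    have hnum : HasDerivAt (fun s => c * s * g s) (c * g s + c * s * (-(gd s))) s := by
      have h1 : HasDerivAt (fun s : ℝ => c * s) c s := by
        simpa using (hasDerivAt_id s).const_mul c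
      simpa [Pi.mul_def] using h1.mul (hgD s hs)
    have hden : HasDerivAt (fun s => φ s - lam + lam * g s)
        (1 + lamp * (-(gdP s)) + lam * (-(gd s))) s := by
      have hφfun : (fun s => φ s - lam + lam * g s)
          = fun s => s - lamp + lamp * gP s - lam + lam * g s := by
        funext x; rw [hφ x]
      rw [hφfun]
      have h1 : HasDerivAt (fun s : ℝ => s - lamp + lamp * gP s - lam + lam * g s)
          (1 + lamp * (-(gdP s)) + lam * (-(gd s))) s := by
        have := ((((hasDerivAt_id s).sub_const lamp).add
          ((hgPD s hs).const_mul lamp)).sub_const lam).add ((hgD s hs).const_mul lam)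
        simpa [Pi.add_def] using this
      exact h1
    have hdne : φ s - lam + lam * g s ≠ 0 := by
      rw [hDden s hs]
      exact mul_ne_zero hs.ne' (hNne s hs)
    have hdiv := hnum.div hden hdne
    have hfDfun : fD = fun s => c * s * g s / (φ s - lam + lam * g s) := by
      funext x; rw [hfD x]
    rw [hfDfun]
    rw [(show HasDerivAt (fun s => c * s * g s / (φ s - lam + lam * g s)) _ s from hdiv).deriv]
    rw [hDden s hs]
  -- rewrite derivative in limit-friendly form
  have hfD'' : ∀ s : ℝ, 0 < s → deriv fD s =
      -(c * gd s) / N s - c * g s * (lam * K s + lamp * KP s) / (N s) ^ 2 := by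
    intro s hs
    rw [hfD' s hs]
    have hsne : s ≠ 0 := hs.ne'
    have hDeq : s - lam * (1 - g s) - lamp * (1 - gP s) = s * N s := by
      simp only [hN, hJ, hJP]
      field_simp
    have hDne : s - lam * (1 - g s) - lamp * (1 - gP s) ≠ 0 := by
      rw [hDeq]; exact mul_ne_zero hsne (hNne s hs)
    simp only [hK, hKP, hN, hJ, hJP]
    field_simp
    ring
  -- limits
  have hgten : Tendsto g (𝓝[>] 0) (𝓝 1) := aux_tendsto_g μ hHMeas hHNonneg
  have hgdten : Tendsto gd (𝓝[>] 0) (𝓝 m1) := aux_tendsto_gd μ hHMeas hHNonneg hHInt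
  have hgdPten : Tendsto gdP (𝓝[>] 0) (𝓝 m1p) := aux_tendsto_gd μ hHpMeas hHpNonneg hHpInt
  have hJten : Tendsto J (𝓝[>] 0) (𝓝 m1) := by
    refine (aux_tendsto_J μ hHMeas hHNonneg hHInt).congr' ?_
    filter_upwards [self_mem_nhdsWithin] with s (hs : 0 < s)
    rw [hJ, aux_J_eq μ hHMeas hHNonneg hs]
  have hJPten : Tendsto JP (𝓝[>] 0) (𝓝 m1p) := by
    refine (aux_tendsto_J μ hHpMeas hHpNonneg hHpInt).congr' ?_
    filter_upwards [self_mem_nhdsWithin] with s (hs : 0 < s)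
    rw [hJP, aux_J_eq μ hHpMeas hHpNonneg hs]
  have hKten : Tendsto K (𝓝[>] 0) (𝓝 (m2 / 2)) := by
    refine (aux_tendsto_K μ hHMeas hHNonneg hH2Int).congr' ?_
    filter_upwards [self_mem_nhdsWithin] with s (hs : 0 < s)
    rw [hK, aux_K_eq μ hHMeas hHNonneg hHInt hs]
  have hKPten : Tendsto KP (𝓝[>] 0) (𝓝 (m2p / 2)) := by
    refine (aux_tendsto_K μ hHpMeas hHpNonneg hHp2Int).congr' ?_
    filter_upwards [self_mem_nhdsWithin] with s (hs : 0 < s)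
    rw [hKP, aux_K_eq μ hHpMeas hHpNonneg hHpInt hs]
  have hNten : Tendsto N (𝓝[>] 0) (𝓝 c) := by
    rw [hN, hcdef]
    exact (tendsto_const_nhds.sub (hJten.const_mul lam)).sub (hJPten.const_mul lamp)
  -- assemble
  have hmain : Tendsto
      (fun s => -(-(c * gd s) / N s - c * g s * (lam * K s + lamp * KP s) / (N s) ^ 2))
      (𝓝[>] 0)
      (𝓝 (-(-(c * m1) / c - c * 1 * (lam * (m2 / 2) + lamp * (m2p / 2)) / c ^ 2))) := by
    refine Tendsto.neg ?_
    refine Tendsto.sub ?_ ?_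
    · exact ((hgdten.const_mul c).neg).div hNten hc.ne'
    · exact ((hgten.const_mul c).mul
        ((hKten.const_mul lam).add (hKPten.const_mul lamp))).div (hNten.pow 2)
          (by positivity)
  have hval : -(-(c * m1) / c - c * 1 * (lam * (m2 / 2) + lamp * (m2p / 2)) / c ^ 2)
      = (lam * m2 + lamp * m2p) / (2 * c) + m1 := by
    field_simp
    ring
  rw [hval] at hmain
  refine hmain.congr' ?_
  filter_upwards [self_mem_nhdsWithin] with s (hs : 0 < s)
  rw [hfD'' s hs]
end
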